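/- Let (Δ,u) be a labeled polytope in ℝⁿ. The function F(b) = Z₀(b)^{n+1}/W₀₀(b)ⁿ, regarded as a differentiable function of b′ on the open set Ω = {b ∈ C*₊(Δ) : b₀ = 1} ⊂ ℝⁿ, has vanishing differential at b ∈ Ω if and only if W_{i0}(b)·Z₀(b) = W₀₀(b)·Z_i(b) for every i = 1,…,n. -/

import Mathlib

open scoped RealInnerProductSpace
open MeasureTheory

noncomputable section

/-- A labeled polytope datum in `ℝⁿ`: `d` inward normals `u l` together with
constants `lam l`, giving defining affine functions `L l x = ⟪u l, x⟫ + lam l`. -/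
structure LabeledPolytope (n d : ℕ) where
  u : Fin d → EuclideanSpace ℝ (Fin n)
  lam : Fin d → ℝ

namespace LabeledPolytope

variable {n d : ℕ}

/-- The defining affine functions `L_l`. -/
def L (P : LabeledPolytope n d) (l : Fin d) (x : EuclideanSpace ℝ (Fin n)) : ℝ :=
  ⟪P.u l, x⟫ + P.lam l

/-- The polytope `Δ = {x | L_l x ≥ 0 ∀ l}`. -/
def Delta (P : LabeledPolytope n d) : Set (EuclideanSpace ℝ (Fin n)) :=
  {x | ∀ l, 0 ≤ P.L l x}

/-- The facet `F_l = Δ ∩ {L_l = 0}`. -/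
def Facet (P : LabeledPolytope n d) (l : Fin d) : Set (EuclideanSpace ℝ (Fin n)) :=
  {x | x ∈ P.Delta ∧ P.L l x = 0}

/-- `(Δ,u)` is a labeled polytope: `n ≥ 1`, `Δ` is a compact polytope with nonempty
interior, and each `F_l` is a nonempty facet of dimension `n - 1`. -/
structure IsLabeledPolytope (P : LabeledPolytope n d) : Prop where
  npos : 1 ≤ n
  compact : IsCompact P.Delta
  int_nonempty : (interior P.Delta).Nonempty
  facet_nonempty : ∀ l, (P.Facet l).Nonempty
  facet_dim : ∀ l, Module.finrank ℝ (affineSpan ℝ (P.Facet l)).direction = n - 1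

/-- The value of the affine function `b = (b₀, b′)` at `x`. -/
def bval (b : ℝ × EuclideanSpace ℝ (Fin n)) (x : EuclideanSpace ℝ (Fin n)) : ℝ :=
  b.1 + ⟪b.2, x⟫

/-- The pairing `⟨(y₀,y),(b₀,b′)⟩ = b₀ y₀ + ⟨b′, y⟩`. -/
def pairing (y b : ℝ × EuclideanSpace ℝ (Fin n)) : ℝ :=
  b.1 * y.1 + ⟪b.2, y.2⟫

/-- The cone `C(Δ) = {(y₀,y) | λ_l y₀ + ⟨u_l, y⟩ ≥ 0 ∀ l} ⊆ ℝ^{1+n}`. -/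
def Cone (P : LabeledPolytope n d) : Set (ℝ × EuclideanSpace ℝ (Fin n)) :=
  {y | ∀ l, 0 ≤ P.lam l * y.1 + ⟪P.u l, y.2⟫}

/-- The dual cone `C*(Δ)`. -/
def Cstar (P : LabeledPolytope n d) : Set (ℝ × EuclideanSpace ℝ (Fin n)) :=
  {b | ∀ y ∈ P.Cone, 0 ≤ pairing y b}

/-- `C*₊(Δ)`: affine functions strictly positive on `Δ`. -/
def CstarPlus (P : LabeledPolytope n d) : Set (ℝ × EuclideanSpace ℝ (Fin n)) :=
  {b | ∀ μ ∈ P.Delta, 0 < bval b μ}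

/-- The map `Ψ_b(μ) = (1,μ)/b(μ)`. -/
def Psi (b : ℝ × EuclideanSpace ℝ (Fin n)) (x : EuclideanSpace ℝ (Fin n)) :
    ℝ × EuclideanSpace ℝ (Fin n) :=
  (bval b x)⁻¹ • ((1 : ℝ), x)

/-- The boundary measure `σ_l`: `‖u_l‖⁻¹` times the `(n-1)`-dimensional Hausdorff
measure restricted to the facet `F_l`. -/
def facetMeasure (P : LabeledPolytope n d) (l : Fin d) :
    Measure (EuclideanSpace ℝ (Fin n)) :=
  (ENNReal.ofReal ‖P.u l‖⁻¹) • (μH[(n : ℝ) - 1]).restrict (P.Facet l)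

/-- `W₀₀(b) = ∫_Δ b(μ)^{-(n+1)} dμ`. -/
def W00 (P : LabeledPolytope n d) (b : ℝ × EuclideanSpace ℝ (Fin n)) : ℝ :=
  ∫ μ in P.Delta, (bval b μ ^ (n + 1))⁻¹

/-- `W_{i0}(b) = ∫_Δ μ_i b(μ)^{-(n+2)} dμ`. -/
def Wi0 (P : LabeledPolytope n d) (i : Fin n) (b : ℝ × EuclideanSpace ℝ (Fin n)) : ℝ :=
  ∫ μ in P.Delta, μ i * (bval b μ ^ (n + 2))⁻¹

/-- `Z₀(b) = 2 Σ_l ∫_{F_l} b(μ)^{-n} dσ_l`. -/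
def Z0 (P : LabeledPolytope n d) (b : ℝ × EuclideanSpace ℝ (Fin n)) : ℝ :=
  2 * ∑ l, ∫ μ, (bval b μ ^ n)⁻¹ ∂(P.facetMeasure l)

/-- `Z_i(b) = 2 Σ_l ∫_{F_l} μ_i b(μ)^{-(n+1)} dσ_l`. -/
def Zi (P : LabeledPolytope n d) (i : Fin n) (b : ℝ × EuclideanSpace ℝ (Fin n)) : ℝ :=
  2 * ∑ l, ∫ μ, μ i * (bval b μ ^ (n + 1))⁻¹ ∂(P.facetMeasure l)

/-- `Ω = {b ∈ C*₊(Δ) : b₀ = 1}`, viewed as an open subset of `ℝⁿ` via `b ↔ b′`. -/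
def Omega (P : LabeledPolytope n d) : Set (EuclideanSpace ℝ (Fin n)) :=
  {b' | ((1 : ℝ), b') ∈ P.CstarPlus}

/-- The functional `F(b) = Z₀(b)^{n+1} / W₀₀(b)ⁿ` as a function of `b′` (with `b₀ = 1`). -/
def Fcal (P : LabeledPolytope n d) (b' : EuclideanSpace ℝ (Fin n)) : ℝ :=
  P.Z0 (1, b') ^ (n + 1) / P.W00 (1, b') ^ n

end LabeledPolytope


open scoped ENNReal NNReal
open Metric Bornology

section Stmt6AuxSec
namespace Stmt6Aux


/-- Bounded sets in `EuclideanSpace ℝ (Fin m)` have finite `m`-dimensional Hausdorff measure. -/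
lemma hausdorff_lt_top_of_isBounded {m : ℕ} {s : Set (EuclideanSpace ℝ (Fin m))}
    (hs : IsBounded s) : μH[(m : ℝ)] s < ⊤ := by
  set φ : EuclideanSpace ℝ (Fin m) ≃ (Fin m → ℝ) := WithLp.equiv 2 (Fin m → ℝ) with hφdef
  have hφ : LipschitzWith 1 φ := PiLp.lipschitzWith_ofLp 2 _
  have hψ : LipschitzWith ((Fintype.card (Fin m) : NNReal) ^ ((1 : ℝ≥0∞) / 2).toReal) φ.symm :=
    (PiLp.antilipschitzWith_ofLp 2 _).to_rightInverse φ.right_inv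
  have h1 : s = φ.symm '' (φ '' s) := by rw [Equiv.symm_image_image]
  have hpi : (μH[(m : ℝ)] : Measure (Fin m → ℝ)) = volume := by
    simpa using (hausdorffMeasure_pi_real (ι := Fin m))
  have h2 : μH[(m : ℝ)] s ≤ (((Fintype.card (Fin m) : NNReal) ^ ((1 : ℝ≥0∞) / 2).toReal : NNReal) : ℝ≥0∞) ^ (m : ℝ)
      * μH[(m : ℝ)] (φ '' s) := by
    conv_lhs => rw [h1]
    exact hψ.hausdorffMeasure_image_le (by positivity) _
  have h3 : μH[(m : ℝ)] (φ '' s) < ⊤ := by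
    rw [hpi]
    have hb : IsBounded (φ '' s) := (hφ.isBounded_image hs)
    exact lt_of_le_of_lt (measure_mono subset_closure) hb.isCompact_closure.measure_lt_top
  refine lt_of_le_of_lt h2 ?_
  exact ENNReal.mul_lt_top (ENNReal.rpow_lt_top_of_nonneg (by positivity) ENNReal.coe_ne_top) h3

/-- A compact set has finite Hausdorff measure in the dimension of its affine span. -/
lemma hausdorff_lt_top_of_isCompact {n : ℕ} {s : Set (EuclideanSpace ℝ (Fin n))}
    (hs : IsCompact s) :
    μH[(Module.finrank ℝ (affineSpan ℝ s).direction : ℝ)] s < ⊤ := by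
  rcases s.eq_empty_or_nonempty with rfl | ⟨p, hp⟩
  · simp
  set V := (affineSpan ℝ s).direction with hV
  set m := Module.finrank ℝ V with hm
  set B := stdOrthonormalBasis ℝ V with hB
  set f : EuclideanSpace ℝ (Fin m) → EuclideanSpace ℝ (Fin n) :=
    fun w => p + ((B.repr.symm w : V) : EuclideanSpace ℝ (Fin n)) with hf
  have hiso : Isometry f := by
    apply Isometry.of_dist_eq
    intro w1 w2
    have : f w1 - f w2 = ((B.repr.symm w1 - B.repr.symm w2 : V) : EuclideanSpace ℝ (Fin n)) := by
      simp [hf, add_sub_add_left_eq_sub]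
    rw [dist_eq_norm, this]
    rw [show ((B.repr.symm w1 - B.repr.symm w2 : V) : EuclideanSpace ℝ (Fin n))
        = ((B.repr.symm (w1 - w2) : V) : EuclideanSpace ℝ (Fin n)) by rw [map_sub]]
    rw [Submodule.norm_coe, LinearIsometryEquiv.norm_map, dist_eq_norm]
  have hrange : s ⊆ Set.range f := by
    intro x hx
    have hx' : x ∈ affineSpan ℝ s := subset_affineSpan ℝ s hx
    have hp' : p ∈ affineSpan ℝ s := subset_affineSpan ℝ s hp
    have hmem : x - p ∈ V := AffineSubspace.vsub_mem_direction hx' hp'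
    refine ⟨B.repr ⟨x - p, hmem⟩, ?_⟩
    simp [hf]
  have himg : f '' (f ⁻¹' s) = s := Set.image_preimage_eq_of_subset hrange
  rw [← himg, hiso.hausdorffMeasure_image (Or.inl (by positivity))]
  apply hausdorff_lt_top_of_isBounded
  have : IsBounded s := hs.isBounded
  exact (hiso.antilipschitz.isBounded_preimage) this



lemma hasDerivAt_pow_inv (k : ℕ) {t : ℝ} (ht : t ≠ 0) :
    HasDerivAt (fun t : ℝ => (t ^ k)⁻¹) (-(k : ℝ) * (t ^ (k + 1))⁻¹) t := by
  have h := hasDerivAt_zpow (-(k : ℤ)) t (Or.inl ht)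
  have e1 : (fun u : ℝ => u ^ (-(k : ℤ))) = fun u : ℝ => (u ^ k)⁻¹ := by
    funext u; rw [zpow_neg, zpow_natCast]
  rw [e1] at h
  refine HasDerivAt.congr_deriv h ?_
  rw [show -(k : ℤ) - 1 = -((k : ℤ) + 1) by ring, zpow_neg]
  rw [show ((k : ℤ) + 1) = ((k + 1 : ℕ) : ℤ) by push_cast; ring, zpow_natCast]
  push_cast
  ring

lemma param_deriv {n : ℕ} (k : ℕ) (ν : Measure (EuclideanSpace ℝ (Fin n)))
    [IsFiniteMeasure ν] {S : Set (EuclideanSpace ℝ (Fin n))} (hS : IsCompact S)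
    (hmem : ∀ᵐ x ∂ν, x ∈ S) (w : EuclideanSpace ℝ (Fin n) → ℝ) (hw : Continuous w)
    {b' : EuclideanSpace ℝ (Fin n)} (hpos : ∀ x ∈ S, 0 < 1 + ⟪b', x⟫) :
    Integrable (fun x => w x * ((1 + ⟪b', x⟫) ^ k)⁻¹) ν ∧
    ∃ L : EuclideanSpace ℝ (Fin n) →L[ℝ] ℝ,
      HasFDerivAt (fun c' => ∫ x, w x * ((1 + ⟪c', x⟫) ^ k)⁻¹ ∂ν) L b' ∧
      ∀ v, L v = -(k : ℝ) * ∫ x, w x * ⟪x, v⟫ * ((1 + ⟪b', x⟫) ^ (k + 1))⁻¹ ∂ν := by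
  classical
  obtain ⟨ε, hε, hεS⟩ : ∃ ε : ℝ, 0 < ε ∧ ∀ x ∈ S, ε ≤ 1 + ⟪b', x⟫ := by
    rcases S.eq_empty_or_nonempty with rfl | hne
    · exact ⟨1, one_pos, by simp⟩
    · obtain ⟨x₀, hx₀S, hx₀⟩ := hS.exists_isMinOn (f := fun x : EuclideanSpace ℝ (Fin n) =>
          1 + ⟪b', x⟫) hne
        ((continuous_const.add (continuous_const.inner continuous_id)).continuousOn)
      exact ⟨1 + ⟪b', x₀⟫, hpos x₀ hx₀S, fun x hx => hx₀ hx⟩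
  obtain ⟨R₀, hR₀⟩ := hS.isBounded.exists_norm_le
  set R : ℝ := max R₀ 1 with hRdef
  have hR1 : (1 : ℝ) ≤ R := le_max_right _ _
  have hRpos : 0 < R := lt_of_lt_of_le one_pos hR1
  have hR : ∀ x ∈ S, ‖x‖ ≤ R := fun x hx => le_trans (hR₀ x hx) (le_max_left _ _)
  obtain ⟨C₀, hC₀⟩ := hS.exists_bound_of_continuousOn hw.continuousOn
  set C : ℝ := max C₀ 0 with hCdef
  have hC0 : 0 ≤ C := le_max_right _ _
  have hC : ∀ x ∈ S, |w x| ≤ C := fun x hx => le_trans (hC₀ x hx) (le_max_left _ _)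
  set δ : ℝ := ε / (2 * R) with hδdef
  have hδ : 0 < δ := by positivity
  have key : ∀ c' ∈ ball b' δ, ∀ x ∈ S, ε / 2 ≤ 1 + ⟪c', x⟫ := by
    intro c' hc' x hx
    have h2 : ‖c' - b'‖ < δ := by rwa [mem_ball, dist_eq_norm] at hc'
    have h1 : |⟪c' - b', x⟫| ≤ ‖c' - b'‖ * ‖x‖ := abs_real_inner_le_norm _ _
    have h3 : ‖c' - b'‖ * ‖x‖ ≤ δ * R :=
      mul_le_mul h2.le (hR x hx) (norm_nonneg _) hδ.le
    have h4 : δ * R = ε / 2 := by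
      rw [hδdef]; field_simp
    have h5 : ⟪c', x⟫ - ⟪b', x⟫ = ⟪c' - b', x⟫ := (inner_sub_left _ _ _).symm
    have h6 := hεS x hx
    have h7 := (abs_le.mp h1).1
    nlinarith
  set F' : EuclideanSpace ℝ (Fin n) → EuclideanSpace ℝ (Fin n) →
      (EuclideanSpace ℝ (Fin n) →L[ℝ] ℝ) :=
    fun c' x => (w x * (-(k : ℝ) * ((1 + ⟪c', x⟫) ^ (k + 1))⁻¹)) • (innerSL ℝ x) with hF'def
  have hdiff : ∀ x, ∀ c' : EuclideanSpace ℝ (Fin n), 0 < 1 + ⟪c', x⟫ →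
      HasFDerivAt (fun c' => w x * ((1 + ⟪c', x⟫) ^ k)⁻¹) (F' c' x) c' := by
    intro x c' hc'
    have e : (fun c' : EuclideanSpace ℝ (Fin n) => 1 + ⟪c', x⟫)
        = fun c' => 1 + (innerSL ℝ x) c' := by
      funext c'; rw [real_inner_comm]; rfl
    have h1 : HasFDerivAt (fun c' : EuclideanSpace ℝ (Fin n) => 1 + ⟪c', x⟫)
        ((innerSL ℝ) x) c' := by
      rw [e]; exact ((innerSL ℝ x).hasFDerivAt).const_add 1
    have h2 := (hasDerivAt_pow_inv k hc'.ne').comp_hasFDerivAt c' h1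
    have h3 := h2.const_mul (w x)
    show HasFDerivAt (fun c' => w x * ((1 + ⟪c', x⟫) ^ k)⁻¹)
      ((w x * (-(k : ℝ) * ((1 + ⟪c', x⟫) ^ (k + 1))⁻¹)) • (innerSL ℝ) x) c'
    rw [← smul_smul]
    exact h3
  have meas : ∀ c' : EuclideanSpace ℝ (Fin n),
      AEStronglyMeasurable (fun x => w x * ((1 + ⟪c', x⟫) ^ k)⁻¹) ν := by
    intro c'
    have hcont : Continuous fun x : EuclideanSpace ℝ (Fin n) => 1 + ⟪c', x⟫ :=
      continuous_const.add (continuous_const.inner continuous_id)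
    exact (hw.measurable.mul ((hcont.pow k).measurable.inv)).aestronglyMeasurable
  have int_ball : ∀ c' ∈ ball b' δ,
      Integrable (fun x => w x * ((1 + ⟪c', x⟫) ^ k)⁻¹) ν := by
    intro c' hc'
    refine ⟨meas c', HasFiniteIntegral.of_bounded (C := C * ((ε / 2) ^ k)⁻¹) ?_⟩
    refine hmem.mono fun x hx => ?_
    have h1 : ε / 2 ≤ 1 + ⟪c', x⟫ := key c' hc' x hx
    have h2 : (0 : ℝ) < ε / 2 := by positivity
    have hgpos : (0 : ℝ) < 1 + ⟪c', x⟫ := lt_of_lt_of_le h2 h1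
    have h3 : ((1 + ⟪c', x⟫) ^ k)⁻¹ ≤ ((ε / 2) ^ k)⁻¹ := by
      gcongr
    rw [Real.norm_eq_abs, abs_mul,
      abs_of_nonneg (inv_nonneg.mpr (pow_nonneg hgpos.le k))]
    exact mul_le_mul (hC x hx) h3 (inv_nonneg.mpr (pow_nonneg hgpos.le k)) hC0
  set M : ℝ := C * ((k : ℝ) * ((ε / 2) ^ (k + 1))⁻¹) * R with hMdef
  have hbound : ∀ᵐ x ∂ν, ∀ c' ∈ ball b' δ, ‖F' c' x‖ ≤ M := by
    refine hmem.mono fun x hx c' hc' => ?_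
    have h1 : ε / 2 ≤ 1 + ⟪c', x⟫ := key c' hc' x hx
    have h2 : (0 : ℝ) < ε / 2 := by positivity
    have hgpos : (0 : ℝ) < 1 + ⟪c', x⟫ := lt_of_lt_of_le h2 h1
    have h3 : ((1 + ⟪c', x⟫) ^ (k + 1))⁻¹ ≤ ((ε / 2) ^ (k + 1))⁻¹ := by
      gcongr
    have h5 : ‖w x * (-(k : ℝ) * ((1 + ⟪c', x⟫) ^ (k + 1))⁻¹)‖
        ≤ C * ((k : ℝ) * ((ε / 2) ^ (k + 1))⁻¹) := by
      rw [Real.norm_eq_abs, abs_mul, abs_mul, abs_neg,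
        abs_of_nonneg (a := (k : ℝ)) (by positivity),
        abs_of_nonneg (inv_nonneg.mpr (pow_nonneg hgpos.le (k + 1)))]
      refine mul_le_mul (hC x hx) ?_
        (mul_nonneg (by positivity) (inv_nonneg.mpr (pow_nonneg hgpos.le (k + 1)))) hC0
      exact mul_le_mul_of_nonneg_left h3 (by positivity)
    calc ‖F' c' x‖ = ‖w x * (-(k : ℝ) * ((1 + ⟪c', x⟫) ^ (k + 1))⁻¹)‖ * ‖(innerSL ℝ) x‖ := by
          show ‖(w x * (-(k : ℝ) * ((1 + ⟪c', x⟫) ^ (k + 1))⁻¹)) • (innerSL ℝ) x‖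
            = ‖w x * (-(k : ℝ) * ((1 + ⟪c', x⟫) ^ (k + 1))⁻¹)‖ * ‖(innerSL ℝ) x‖
          exact norm_smul (w x * (-(k : ℝ) * ((1 + ⟪c', x⟫) ^ (k + 1))⁻¹)) ((innerSL ℝ) x)
      _ = ‖w x * (-(k : ℝ) * ((1 + ⟪c', x⟫) ^ (k + 1))⁻¹)‖ * ‖x‖ := by
          rw [innerSL_apply_norm]
      _ ≤ C * ((k : ℝ) * ((ε / 2) ^ (k + 1))⁻¹) * R :=
          mul_le_mul h5 (hR x hx) (norm_nonneg _) (by positivity)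
  have h_diff : ∀ᵐ x ∂ν, ∀ c' ∈ ball b' δ,
      HasFDerivAt (fun c' => w x * ((1 + ⟪c', x⟫) ^ k)⁻¹) (F' c' x) c' :=
    hmem.mono fun x hx c' hc' =>
      hdiff x c' (lt_of_lt_of_le (by positivity) (key c' hc' x hx))
  have hF'meas : AEStronglyMeasurable (F' b') ν := by
    show AEStronglyMeasurable
      (fun x => (w x * (-(k : ℝ) * ((1 + ⟪b', x⟫) ^ (k + 1))⁻¹)) • (innerSL ℝ) x) ν
    apply AEStronglyMeasurable.fun_smul
    · have hcont : Continuous fun x : EuclideanSpace ℝ (Fin n) => 1 + ⟪b', x⟫ :=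
        continuous_const.add (continuous_const.inner continuous_id)
      exact (hw.measurable.mul
        ((measurable_const.mul (hcont.pow (k + 1)).measurable.inv))).aestronglyMeasurable
    · exact (innerSL ℝ).continuous.aestronglyMeasurable
  have main := hasFDerivAt_integral_of_dominated_of_fderiv_le (ball_mem_nhds b' hδ)
    (Filter.Eventually.of_forall fun c' => meas c') (int_ball b' (mem_ball_self hδ)) hF'meas
    hbound (integrable_const M) h_diff
  refine ⟨int_ball b' (mem_ball_self hδ), ∫ x, F' b' x ∂ν, main, ?_⟩
  have int_F' : Integrable (F' b') ν :=
    ⟨hF'meas, HasFiniteIntegral.of_bounded (C := M)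
      (hbound.mono fun x hx => hx b' (mem_ball_self hδ))⟩
  intro v
  rw [ContinuousLinearMap.integral_apply int_F' v]
  have e : (fun x => (F' b' x) v)
      = fun x => -(k : ℝ) * (w x * ⟪x, v⟫ * ((1 + ⟪b', x⟫) ^ (k + 1))⁻¹) := by
    funext x
    show ((w x * (-(k : ℝ) * ((1 + ⟪b', x⟫) ^ (k + 1))⁻¹)) • (innerSL ℝ) x) v = _
    simp only [ContinuousLinearMap.smul_apply, innerSL_apply_apply, smul_eq_mul]
    ring
  rw [e, integral_const_mul]


end Stmt6Aux
end Stmt6AuxSec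

open LabeledPolytope in
/-- The function `F(b) = Z₀(b)^{n+1}/W₀₀(b)ⁿ`, regarded as a
differentiable function of `b′` on `Ω = {b ∈ C*₊(Δ) : b₀ = 1}`, has vanishing differential
at `b ∈ Ω` if and only if `W_{i0}(b)·Z₀(b) = W₀₀(b)·Z_i(b)` for every `i`. -/
theorem stmt6 {n d : ℕ} (P : LabeledPolytope n d) (hP : P.IsLabeledPolytope)
    (b' : EuclideanSpace ℝ (Fin n)) (hb : b' ∈ P.Omega) :
    DifferentiableAt ℝ P.Fcal b' ∧
      (fderiv ℝ P.Fcal b' = 0 ↔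
        ∀ i : Fin n,
          P.Wi0 i (1, b') * P.Z0 (1, b') = P.W00 (1, b') * P.Zi i (1, b')) := by
  classical
  have hΔclosed : IsClosed P.Delta := hP.compact.isClosed
  have hΔmeas : MeasurableSet P.Delta := hΔclosed.measurableSet
  have hpos : ∀ x ∈ P.Delta, 0 < 1 + ⟪b', x⟫ := fun x hx => hb x hx
  have hLcont : ∀ l, Continuous (P.L l) := fun l =>
    (continuous_const.inner continuous_id).add continuous_const
  have hFclosed : ∀ l, IsClosed (P.Facet l) := fun l => by
    have e : P.Facet l = P.Delta ∩ {x | P.L l x = 0} := rfl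
    rw [e]
    exact hΔclosed.inter (isClosed_eq (hLcont l) continuous_const)
  have hFcompact : ∀ l, IsCompact (P.Facet l) :=
    fun l => hP.compact.of_isClosed_subset (hFclosed l) fun x hx => hx.1
  have hFsub : ∀ l, P.Facet l ⊆ P.Delta := fun l x hx => hx.1
  have hfinH : ∀ l, μH[(n : ℝ) - 1] (P.Facet l) < ⊤ := by
    intro l
    have h1 := Stmt6Aux.hausdorff_lt_top_of_isCompact (hFcompact l)
    have h2 : ((Module.finrank ℝ (affineSpan ℝ (P.Facet l)).direction : ℝ)) = (n : ℝ) - 1 := by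
      rw [hP.facet_dim l]
      have h3 : (1 : ℕ) ≤ n := hP.npos
      push_cast [Nat.cast_sub h3]
      ring
    rwa [h2] at h1
  have hfin : ∀ l, IsFiniteMeasure (P.facetMeasure l) := by
    intro l
    constructor
    rw [show P.facetMeasure l
        = (ENNReal.ofReal ‖P.u l‖⁻¹) • (μH[(n : ℝ) - 1]).restrict (P.Facet l) from rfl,
      Measure.smul_apply, smul_eq_mul, Measure.restrict_apply_univ]
    exact ENNReal.mul_lt_top ENNReal.ofReal_lt_top (hfinH l)
  have hmemF : ∀ l, ∀ᵐ x ∂(P.facetMeasure l), x ∈ P.Facet l := fun l =>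
    Measure.ae_smul_measure (ae_restrict_mem (hFclosed l).measurableSet) _
  haveI hνΔfin : IsFiniteMeasure (volume.restrict P.Delta) :=
    ⟨by rw [Measure.restrict_apply_univ]; exact hP.compact.measure_lt_top⟩
  have hmemΔ : ∀ᵐ x ∂(volume.restrict P.Delta), x ∈ P.Delta := ae_restrict_mem hΔmeas
  -- derivative of W00
  obtain ⟨hWint, LW, hLWat, hLWval⟩ :=
    Stmt6Aux.param_deriv (n + 1) (volume.restrict P.Delta) hP.compact hmemΔ
      (fun _ => (1 : ℝ)) continuous_const hpos
  have hWfun : (fun c' => ∫ x, (1 : ℝ) * ((1 + ⟪c', x⟫) ^ (n + 1))⁻¹ ∂(volume.restrict P.Delta))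
      = fun c' => P.W00 (1, c') := by
    funext c'
    simp only [one_mul]
    rfl
  have hW : HasFDerivAt (fun c' => P.W00 (1, c')) LW b' := hWfun ▸ hLWat
  have hLW_app : ∀ i : Fin n, LW (EuclideanSpace.single i 1)
      = -((n : ℝ) + 1) * P.Wi0 i (1, b') := by
    intro i
    rw [hLWval]
    have e : (fun x : EuclideanSpace ℝ (Fin n) =>
          (1 : ℝ) * ⟪x, EuclideanSpace.single i 1⟫ * ((1 + ⟪b', x⟫) ^ (n + 1 + 1))⁻¹)
        = fun x : EuclideanSpace ℝ (Fin n) => x i * ((1 + ⟪b', x⟫) ^ (n + 2))⁻¹ := by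
      funext x
      rw [one_mul, EuclideanSpace.inner_single_right]
      simp
    rw [e]
    have e2 : (∫ x, x i * ((1 + ⟪b', x⟫) ^ (n + 2))⁻¹ ∂(volume.restrict P.Delta))
        = P.Wi0 i (1, b') := rfl
    rw [e2]
    push_cast
    ring
  -- derivative of Z0
  have hZfull : ∀ l : Fin d,
      Integrable (fun x => ((1 + ⟪b', x⟫) ^ n)⁻¹) (P.facetMeasure l) ∧
      ∃ L : EuclideanSpace ℝ (Fin n) →L[ℝ] ℝ,
        HasFDerivAt (fun c' => ∫ x, ((1 + ⟪c', x⟫) ^ n)⁻¹ ∂(P.facetMeasure l)) L b' ∧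
        ∀ v, L v = -(n : ℝ) * ∫ x, ⟪x, v⟫ * ((1 + ⟪b', x⟫) ^ (n + 1))⁻¹ ∂(P.facetMeasure l) := by
    intro l
    haveI := hfin l
    obtain ⟨hint, L, hL, hLval⟩ := Stmt6Aux.param_deriv n (P.facetMeasure l) (hFcompact l)
      (hmemF l) (fun _ => (1 : ℝ)) continuous_const (fun x hx => hpos x (hFsub l hx))
    exact ⟨by simpa only [one_mul] using hint, L, by simpa only [one_mul] using hL,
      fun v => by simpa only [one_mul] using hLval v⟩
  choose hZint LZl hLZl hLZlval using hZfull
  have hZsum : HasFDerivAt (fun c' => ∑ l, ∫ x, ((1 + ⟪c', x⟫) ^ n)⁻¹ ∂(P.facetMeasure l))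
      (∑ l, LZl l) b' := HasFDerivAt.fun_sum (fun l _ => hLZl l)
  set LZ : EuclideanSpace ℝ (Fin n) →L[ℝ] ℝ := (2 : ℝ) • ∑ l, LZl l with hLZdef
  have hZ : HasFDerivAt (fun c' => P.Z0 (1, c')) LZ b' := by
    have h2 := hZsum.const_mul (2 : ℝ)
    have e : (fun c' => (2 : ℝ) * ∑ l, ∫ x, ((1 + ⟪c', x⟫) ^ n)⁻¹ ∂(P.facetMeasure l))
        = fun c' => P.Z0 (1, c') := rfl
    rw [e] at h2
    rwa [hLZdef]
  have hLZ_app : ∀ i : Fin n, LZ (EuclideanSpace.single i 1) = -(n : ℝ) * P.Zi i (1, b') := by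
    intro i
    rw [hLZdef, ContinuousLinearMap.smul_apply, ContinuousLinearMap.sum_apply]
    have e1 : ∀ l, (LZl l) (EuclideanSpace.single i 1)
        = -(n : ℝ) * ∫ x, x i * ((1 + ⟪b', x⟫) ^ (n + 1))⁻¹ ∂(P.facetMeasure l) := by
      intro l
      rw [hLZlval l]
      congr 1
      congr 1
      funext x
      rw [EuclideanSpace.inner_single_right]
      simp
    rw [Finset.sum_congr rfl (fun l _ => e1 l), ← Finset.mul_sum, smul_eq_mul]
    have e2 : P.Zi i (1, b')
        = 2 * ∑ l, ∫ x, x i * ((1 + ⟪b', x⟫) ^ (n + 1))⁻¹ ∂(P.facetMeasure l) := rfl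
    rw [e2]
    ring
  -- positivity of W00
  have hWval_int : Integrable (fun x => ((1 + ⟪b', x⟫) ^ (n + 1))⁻¹) (volume.restrict P.Delta) :=
    by simpa only [one_mul] using hWint
  have hWpos : 0 < P.W00 (1, b') := by
    have hnn : 0 ≤ᵐ[volume.restrict P.Delta] fun x => ((1 + ⟪b', x⟫) ^ (n + 1))⁻¹ :=
      hmemΔ.mono fun x hx => inv_nonneg.mpr (pow_nonneg (hpos x hx).le _)
    have hiff := integral_pos_iff_support_of_nonneg_ae hnn hWval_int
    have hsupp : interior P.Delta ⊆ Function.support fun x => ((1 + ⟪b', x⟫) ^ (n + 1))⁻¹ := by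
      intro x hx
      exact (inv_pos.mpr (pow_pos (hpos x (interior_subset hx)) _)).ne'
    have hμ : 0 < (volume.restrict P.Delta)
        (Function.support fun x => ((1 + ⟪b', x⟫) ^ (n + 1))⁻¹) := by
      refine lt_of_lt_of_le ?_ (measure_mono hsupp)
      rw [Measure.restrict_apply isOpen_interior.measurableSet,
        Set.inter_eq_self_of_subset_left interior_subset]
      exact isOpen_interior.measure_pos volume hP.int_nonempty
    exact hiff.mpr hμ
  -- Z = 0 forces Zi = 0
  have hZizero : P.Z0 (1, b') = 0 → ∀ i : Fin n, P.Zi i (1, b') = 0 := by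
    intro hZ0 i
    have hI : ∀ l, 0 ≤ ∫ x, ((1 + ⟪b', x⟫) ^ n)⁻¹ ∂(P.facetMeasure l) := fun l =>
      integral_nonneg_of_ae ((hmemF l).mono fun x hx =>
        inv_nonneg.mpr (pow_nonneg (hpos x (hFsub l hx)).le n))
    have hsum : ∑ l, ∫ x, ((1 + ⟪b', x⟫) ^ n)⁻¹ ∂(P.facetMeasure l) = 0 := by
      have h2 : (2 : ℝ) * ∑ l, ∫ x, ((1 + ⟪b', x⟫) ^ n)⁻¹ ∂(P.facetMeasure l)
          = P.Z0 (1, b') := rfl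
      rw [hZ0] at h2
      linarith
    have hμ0 : ∀ l, P.facetMeasure l = 0 := by
      intro l
      have h0 : ∫ x, ((1 + ⟪b', x⟫) ^ n)⁻¹ ∂(P.facetMeasure l) = 0 :=
        (Finset.sum_eq_zero_iff_of_nonneg (fun l _ => hI l)).mp hsum l (Finset.mem_univ l)
      have heq0 := (integral_eq_zero_iff_of_nonneg_ae ((hmemF l).mono fun x hx =>
        inv_nonneg.mpr (pow_nonneg (hpos x (hFsub l hx)).le n)) (hZint l)).mp h0
      have hcontra : ∀ᵐ x ∂(P.facetMeasure l), False := by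
        filter_upwards [heq0, hmemF l] with x h1 h2
        have h3 : 0 < ((1 + ⟪b', x⟫) ^ n)⁻¹ :=
          inv_pos.mpr (pow_pos (hpos x (hFsub l h2)) n)
        exact absurd h1 h3.ne'
      have h4 : P.facetMeasure l Set.univ = 0 := by simpa using ae_iff.mp hcontra
      exact Measure.measure_univ_eq_zero.mp h4
    have e2 : P.Zi i (1, b')
        = 2 * ∑ l, ∫ x, x i * ((1 + ⟪b', x⟫) ^ (n + 1))⁻¹ ∂(P.facetMeasure l) := rfl
    rw [e2]
    simp only [hμ0, integral_zero_measure, Finset.sum_const_zero, mul_zero]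
  -- derivative of Fcal
  have hA : HasFDerivAt (fun c' => P.Z0 (1, c') ^ (n + 1))
      ((((n + 1 : ℕ) : ℝ) * P.Z0 (1, b') ^ n) • LZ) b' :=
    by have := (hasDerivAt_pow (n + 1) (P.Z0 (1, b'))).comp_hasFDerivAt b' hZ; exact this
  have hB : HasFDerivAt (fun c' => (P.W00 (1, c') ^ n)⁻¹)
      ((-(n : ℝ) * (P.W00 (1, b') ^ (n + 1))⁻¹) • LW) b' :=
    by have := (Stmt6Aux.hasDerivAt_pow_inv n hWpos.ne').comp_hasFDerivAt b' hW; exact this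
  set LF : EuclideanSpace ℝ (Fin n) →L[ℝ] ℝ :=
    (P.Z0 (1, b') ^ (n + 1)) • ((-(n : ℝ) * (P.W00 (1, b') ^ (n + 1))⁻¹) • LW)
      + ((P.W00 (1, b') ^ n)⁻¹) • ((((n + 1 : ℕ) : ℝ) * P.Z0 (1, b') ^ n) • LZ) with hLFdef
  have hFc : HasFDerivAt P.Fcal LF b' := by
    have h := hA.fun_mul hB
    have e : (fun c' => P.Z0 (1, c') ^ (n + 1) * (P.W00 (1, c') ^ n)⁻¹) = P.Fcal := by
      funext c'
      rw [← div_eq_mul_inv]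
      rfl
    rw [e] at h
    rwa [hLFdef]
  have hn0 : (0 : ℝ) < (n : ℝ) := by exact_mod_cast hP.npos
  have hval : ∀ i : Fin n, LF (EuclideanSpace.single i 1)
      = ((n : ℝ) * ((n : ℝ) + 1)) * P.Z0 (1, b') ^ n * (P.W00 (1, b') ^ (n + 1))⁻¹
        * (P.Z0 (1, b') * P.Wi0 i (1, b') - P.W00 (1, b') * P.Zi i (1, b')) := by
    intro i
    rw [hLFdef]
    simp only [ContinuousLinearMap.add_apply, ContinuousLinearMap.smul_apply, smul_eq_mul]
    rw [hLW_app i, hLZ_app i]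
    have hWne : P.W00 (1, b') ≠ 0 := hWpos.ne'
    push_cast
    field_simp
    ring
  refine ⟨hFc.differentiableAt, ?_⟩
  rw [hFc.fderiv]
  constructor
  · intro h0 i
    have h1 : LF (EuclideanSpace.single i 1) = 0 := by rw [h0]; simp
    rw [hval i] at h1
    by_cases hZ0 : P.Z0 (1, b') = 0
    · have hZi0 : P.Zi i (1, b') = 0 := hZizero hZ0 i
      rw [hZ0, hZi0]
      ring
    · have hne : ((n : ℝ) * ((n : ℝ) + 1)) * P.Z0 (1, b') ^ n
          * (P.W00 (1, b') ^ (n + 1))⁻¹ ≠ 0 := by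
        refine mul_ne_zero (mul_ne_zero (mul_ne_zero hn0.ne' (by positivity))
          (pow_ne_zero _ hZ0)) (inv_ne_zero (pow_ne_zero _ hWpos.ne'))
      have hfac : P.Z0 (1, b') * P.Wi0 i (1, b') - P.W00 (1, b') * P.Zi i (1, b') = 0 :=
        (mul_eq_zero.mp h1).resolve_left hne
      linear_combination hfac
  · intro h
    have hL0 : ∀ i : Fin n, LF (EuclideanSpace.single i 1) = 0 := by
      intro i
      rw [hval i, show P.Z0 (1, b') * P.Wi0 i (1, b') - P.W00 (1, b') * P.Zi i (1, b') = 0 by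
        linear_combination h i, mul_zero]
    have hLF0 : LF = 0 := by
      apply ContinuousLinearMap.coe_injective
      apply Module.Basis.ext (PiLp.basisFun 2 ℝ (Fin n))
      intro i
      rw [PiLp.basisFun_apply]
      simpa using hL0 i
    exact hLF0
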